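/- arXiv:2311.10005 — 3 statements merged into one kernel-verified Lean document; each statement's English description precedes it below -/
import Mathlib

section
/- Let n ≥ 1, let w ∈ ℝ^n be a probability vector with strictly positive entries, let c ∈ ℝ^n, ρ ≥ 0, λ > 0 and η ∈ ℝ. Then for every p ∈ U_w^ρ, Σ_i p_i·c_i ≤ η + ρ·λ + λ·Σ_i w_i·( e^{(c_i − η)/λ} − 1 ). (Weak duality for the KL-constrained inner maximization of the robust tuning problem.) -/
/-- Fenchel–Young inequality for `φ(t) = t log t - t + 1`. -/
lemma young_ineq (t s : ℝ) (ht : 0 ≤ t) :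
    t * s ≤ t * Real.log t - t + Real.exp s := by
  rcases eq_or_lt_of_le ht with h | h
  · simp [← h, (Real.exp_pos s).le]
  · have h1 : s - Real.log t + 1 ≤ Real.exp (s - Real.log t) := Real.add_one_le_exp _
    have h2 : Real.exp (s - Real.log t) = Real.exp s / t := by
      rw [Real.exp_sub, Real.exp_log h]
    have h3 : t * (s - Real.log t + 1) ≤ t * (Real.exp s / t) :=
      mul_le_mul_of_nonneg_left (h2 ▸ h1) ht
    have h4 : t * (Real.exp s / t) = Real.exp s := by
      field_simp
    nlinarith [h3, h4]

/-- Weak duality for the KL-constrained inner maximization of the robust tuning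
problem: for every `p` in the uncertainty region `U_w^ρ`, every `λ > 0` and `η`,
`Σ_i p_i·c_i ≤ η + ρ·λ + λ·Σ_i w_i·(e^{(c_i - η)/λ} - 1)`. -/
theorem robust_tuning_weak_duality (n : ℕ) (hn : 1 ≤ n) (w : Fin n → ℝ)
    (hw : ∀ i, 0 < w i) (hws : ∑ i, w i = 1) (c : Fin n → ℝ) (ρ : ℝ) (hρ : 0 ≤ ρ)
    (lam η : ℝ) (hlam : 0 < lam) (p : Fin n → ℝ)
    (hp : (∀ i, 0 ≤ p i) ∧ (∑ i, p i = 1) ∧ (∑ i, p i * Real.log (p i / w i)) ≤ ρ) :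
    ∑ i, p i * c i ≤ η + ρ * lam + lam * ∑ i, w i * (Real.exp ((c i - η) / lam) - 1) := by
  obtain ⟨hp0, hp1, hpkl⟩ := hp
  set s : Fin n → ℝ := fun i => (c i - η) / lam with hs
  have key : ∀ i, p i * s i ≤ p i * Real.log (p i / w i) - p i + w i * Real.exp (s i) := by
    intro i
    have hy := young_ineq (p i / w i) (s i) (div_nonneg (hp0 i) (hw i).le)
    have hwi := (hw i).ne'
    have h5 := mul_le_mul_of_nonneg_left hy (hw i).le
    have e1 : w i * (p i / w i * s i) = p i * s i := by field_simp
    have e2 : w i * (p i / w i * Real.log (p i / w i) - p i / w i + Real.exp (s i))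
        = p i * Real.log (p i / w i) - p i + w i * Real.exp (s i) := by
      field_simp
    linarith [e1 ▸ e2 ▸ h5]
  have hsum : ∑ i, p i * s i ≤ ρ - 1 + ∑ i, w i * Real.exp (s i) := by
    calc ∑ i, p i * s i
        ≤ ∑ i, (p i * Real.log (p i / w i) - p i + w i * Real.exp (s i)) :=
          Finset.sum_le_sum fun i _ => key i
      _ = (∑ i, p i * Real.log (p i / w i)) - (∑ i, p i) + ∑ i, w i * Real.exp (s i) := by
          rw [Finset.sum_add_distrib, Finset.sum_sub_distrib]
      _ ≤ ρ - 1 + ∑ i, w i * Real.exp (s i) := by rw [hp1]; linarith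
  have hps : ∑ i, p i * s i = ((∑ i, p i * c i) - η) / lam := by
    rw [eq_div_iff hlam.ne', Finset.sum_mul]
    have : ∀ i, p i * s i * lam = p i * c i - η * p i := by
      intro i; simp only [hs]; field_simp
    rw [Finset.sum_congr rfl fun i _ => this i, Finset.sum_sub_distrib,
      ← Finset.mul_sum, hp1, mul_one]
  have hw1 : ∑ i, w i * (Real.exp (s i) - 1) = (∑ i, w i * Real.exp (s i)) - 1 := by
    have : ∀ i, w i * (Real.exp (s i) - 1) = w i * Real.exp (s i) - w i := fun i => by ring
    rw [Finset.sum_congr rfl fun i _ => this i, Finset.sum_sub_distrib, hws]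
  rw [hps] at hsum
  rw [hw1]
  rw [div_le_iff₀ hlam] at hsum
  nlinarith [hsum]
end

section
/- Let n ≥ 1, let w ∈ ℝ^n be a probability vector with strictly positive entries, let c ∈ ℝ^n and ρ > 0. Then sup { Σ_i p_i·c_i : p ∈ U_w^ρ } = inf { η + ρ·λ + λ·Σ_i w_i·( e^{(c_i − η)/λ} − 1 ) : λ > 0, η ∈ ℝ }. (Strong Lagrangian duality for the KL-divergence-constrained worst-case expectation.) -/
open Real Filter

private lemma rt_fy (t s : ℝ) (ht : 0 ≤ t) :
    t * s ≤ (t * Real.log t - t + 1) + (Real.exp s - 1) := by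
  rcases eq_or_lt_of_le ht with h | h
  · simp [← h]
    positivity
  · have h1 : s - Real.log t + 1 ≤ Real.exp (s - Real.log t) := Real.add_one_le_exp _
    have h2 : Real.exp (s - Real.log t) = Real.exp s / t := by
      rw [Real.exp_sub, Real.exp_log h]
    rw [h2] at h1
    have h3 := mul_le_mul_of_nonneg_right h1 h.le
    rw [div_mul_cancel₀ _ h.ne'] at h3
    nlinarith

private lemma rt_weak (n : ℕ) (w p : Fin n → ℝ) (hw : ∀ i, 0 < w i) (hws : ∑ i, w i = 1)
    (c : Fin n → ℝ) (ρ lam η : ℝ) (hlam : 0 < lam)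
    (hp : ∀ i, 0 ≤ p i) (hps : ∑ i, p i = 1)
    (hkl : ∑ i, p i * Real.log (p i / w i) ≤ ρ) :
    ∑ i, p i * c i ≤ η + ρ * lam + lam * ∑ i, w i * (Real.exp ((c i - η) / lam) - 1) := by
  have key : ∀ i, p i * (c i - η) ≤
      lam * (p i * Real.log (p i / w i) - p i + w i)
        + lam * (w i * (Real.exp ((c i - η) / lam) - 1)) := by
    intro i
    have hwi := hw i
    have hfy := rt_fy (p i / w i) ((c i - η) / lam) (div_nonneg (hp i) hwi.le)
    have h2 := mul_le_mul_of_nonneg_left hfy (by positivity : (0:ℝ) ≤ lam * w i)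
    have e1 : lam * w i * (p i / w i * ((c i - η) / lam)) = p i * (c i - η) := by
      field_simp
    have e2 : lam * w i * (p i / w i * Real.log (p i / w i) - p i / w i + 1 +
        (Real.exp ((c i - η) / lam) - 1))
        = lam * (p i * Real.log (p i / w i) - p i + w i)
          + lam * (w i * (Real.exp ((c i - η) / lam) - 1)) := by
      field_simp
    rw [e1, e2] at h2
    exact h2
  have hsum := Finset.sum_le_sum (fun i (_ : i ∈ Finset.univ) => key i)
  have e1 : ∑ i, p i * (c i - η) = (∑ i, p i * c i) - η := by
    simp only [mul_sub]
    rw [Finset.sum_sub_distrib, ← Finset.sum_mul, hps, one_mul]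
  have e3 : ∑ i, (p i * Real.log (p i / w i) - p i + w i)
      = ∑ i, p i * Real.log (p i / w i) := by
    rw [Finset.sum_add_distrib, Finset.sum_sub_distrib, hps, hws]
    ring
  have e2 : ∑ i, (lam * (p i * Real.log (p i / w i) - p i + w i)
      + lam * (w i * (Real.exp ((c i - η) / lam) - 1)))
      = lam * (∑ i, p i * Real.log (p i / w i))
        + lam * ∑ i, w i * (Real.exp ((c i - η) / lam) - 1) := by
    rw [Finset.sum_add_distrib, ← Finset.mul_sum, ← Finset.mul_sum, e3]
  rw [e1, e2] at hsum
  nlinarith [mul_le_mul_of_nonneg_left hkl hlam.le]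

/-- Strong Lagrangian duality for the KL-divergence-constrained worst-case expectation:
`sup { Σ_i p_i·c_i : p ∈ U_w^ρ }`
`= inf { η + ρ·λ + λ·Σ_i w_i·(e^{(c_i - η)/λ} - 1) : λ > 0, η ∈ ℝ }`. -/
theorem robust_tuning_strong_duality (n : ℕ) (hn : 1 ≤ n) (w : Fin n → ℝ)
    (hw : ∀ i, 0 < w i) (hws : ∑ i, w i = 1) (c : Fin n → ℝ) (ρ : ℝ) (hρ : 0 < ρ) :
    sSup {x : ℝ | ∃ p : Fin n → ℝ, (∀ i, 0 ≤ p i) ∧ (∑ i, p i = 1) ∧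
        (∑ i, p i * Real.log (p i / w i)) ≤ ρ ∧ x = ∑ i, p i * c i}
      = sInf {x : ℝ | ∃ lam η : ℝ, 0 < lam ∧
          x = η + ρ * lam + lam * ∑ i, w i * (Real.exp ((c i - η) / lam) - 1)} := by
  classical
  set A := {x : ℝ | ∃ p : Fin n → ℝ, (∀ i, 0 ≤ p i) ∧ (∑ i, p i = 1) ∧
      (∑ i, p i * Real.log (p i / w i)) ≤ ρ ∧ x = ∑ i, p i * c i} with hA
  set B := {x : ℝ | ∃ lam η : ℝ, 0 < lam ∧
      x = η + ρ * lam + lam * ∑ i, w i * (Real.exp ((c i - η) / lam) - 1)} with hB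
  have hwA : (∑ i, w i * c i) ∈ A := by
    refine ⟨w, fun i => (hw i).le, hws, ?_, rfl⟩
    have h0 : ∀ i : Fin n, w i * Real.log (w i / w i) = 0 := by
      intro i
      rw [div_self (hw i).ne', Real.log_one, mul_zero]
    rw [Finset.sum_congr rfl (fun i _ => h0 i), Finset.sum_const_zero]
    exact hρ.le
  have hBne : B.Nonempty := ⟨_, 1, 0, one_pos, rfl⟩
  have hweak : ∀ a ∈ A, ∀ b ∈ B, a ≤ b := by
    rintro a ⟨p, hp1, hp2, hp3, rfl⟩ b ⟨lam, η, hlam, rfl⟩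
    exact rt_weak n w p hw hws c ρ lam η hlam hp1 hp2 hp3
  obtain ⟨b₀, hb₀⟩ := hBne
  have hAbdd : BddAbove A := ⟨b₀, fun a ha => hweak a ha b₀ hb₀⟩
  have hBbdd : BddBelow B := ⟨_, fun b hb => hweak _ hwA b hb⟩
  have hle : sSup A ≤ sInf B :=
    csSup_le ⟨_, hwA⟩ fun a ha => le_csInf ⟨b₀, hb₀⟩ fun b hb => hweak a ha b hb
  refine le_antisymm hle ?_
  -- setup for the max
  have hFne : (Finset.univ : Finset (Fin n)).Nonempty := ⟨⟨0, hn⟩, Finset.mem_univ _⟩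
  set M := Finset.univ.sup' hFne c with hMdef
  have hM : ∀ i, c i ≤ M := fun i => Finset.le_sup' c (Finset.mem_univ i)
  obtain ⟨j, -, hj⟩ := Finset.exists_mem_eq_sup' hFne c
  set W := ∑ i, (if c i = M then w i else 0) with hWeq
  have hW : 0 < W := by
    rw [hWeq, ← Finset.sum_filter]
    refine Finset.sum_pos (fun i _ => hw i) ⟨j, Finset.mem_filter.2 ⟨Finset.mem_univ _, hj.symm⟩⟩
  rcases le_or_gt (-(Real.log W)) ρ with hcase | hcase
  · -- easy case: concentrate on the argmax set
    have hMA : M ∈ A := by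
      refine ⟨fun i => if c i = M then w i / W else 0, ?_, ?_, ?_, ?_⟩
      · intro i
        show (0:ℝ) ≤ if c i = M then w i / W else 0
        split_ifs
        · exact div_nonneg (hw i).le hW.le
        · exact le_rfl
      · show ∑ i, (if c i = M then w i / W else 0) = 1
        have h0 : ∀ i : Fin n, (if c i = M then w i / W else 0)
            = (if c i = M then w i else 0) / W := by
          intro i; split_ifs <;> simp
        rw [Finset.sum_congr rfl (fun i _ => h0 i), ← Finset.sum_div, ← hWeq,
          div_self hW.ne']
      · show ∑ i, (if c i = M then w i / W else 0)
            * Real.log ((if c i = M then w i / W else 0) / w i) ≤ ρ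
        have hpt : ∀ i : Fin n, (if c i = M then w i / W else 0)
              * Real.log ((if c i = M then w i / W else 0) / w i)
            = (if c i = M then w i else 0) / W * (-Real.log W) := by
          intro i
          split_ifs with h
          · have e : (w i / W) / w i = W⁻¹ := by
              rw [div_div, mul_comm, ← div_div, div_self (hw i).ne', one_div]
            rw [e, Real.log_inv]
          · simp
        rw [Finset.sum_congr rfl (fun i _ => hpt i), ← Finset.sum_mul, ← Finset.sum_div,
          ← hWeq, div_self hW.ne', one_mul]
        linarith
      · show M = ∑ i, (if c i = M then w i / W else 0) * c i
        have hpt : ∀ i : Fin n, (if c i = M then w i / W else 0) * c i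
            = (if c i = M then w i else 0) / W * M := by
          intro i
          split_ifs with h
          · rw [h]
          · simp
        rw [Finset.sum_congr rfl (fun i _ => hpt i), ← Finset.sum_mul, ← Finset.sum_div,
          ← hWeq, div_self hW.ne', one_mul]
    have h1 : ∀ lam : ℝ, 0 < lam → sInf B ≤ M + ρ * lam := by
      intro lam hlam
      have hmem : (M + ρ * lam + lam * ∑ i, w i * (Real.exp ((c i - M) / lam) - 1)) ∈ B :=
        ⟨lam, M, hlam, rfl⟩
      have hneg : lam * ∑ i, w i * (Real.exp ((c i - M) / lam) - 1) ≤ 0 := by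
        apply mul_nonpos_of_nonneg_of_nonpos hlam.le
        apply Finset.sum_nonpos
        intro i _
        apply mul_nonpos_of_nonneg_of_nonpos (hw i).le
        have hexp : Real.exp ((c i - M) / lam) ≤ 1 := by
          rw [← Real.exp_zero]
          apply Real.exp_le_exp.2
          apply div_nonpos_of_nonpos_of_nonneg (by linarith [hM i]) hlam.le
        linarith
      have := csInf_le hBbdd hmem
      linarith
    have h2 : sInf B ≤ M := by
      by_contra hcon
      push_neg at hcon
      have h3 := h1 ((sInf B - M) / (2 * ρ)) (div_pos (by linarith) (by positivity))
      have hρ2 : ρ * ((sInf B - M) / (2 * ρ)) = (sInf B - M) / 2 := by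
        field_simp
      rw [hρ2] at h3
      linarith
    exact h2.trans (le_csSup hAbdd hMA)
  · -- hard case: find the exact multiplier by the intermediate value theorem
    set Z : ℝ → ℝ := fun lam => ∑ i, w i * Real.exp ((c i - M) / lam) with hZdef
    set G : ℝ → ℝ := fun lam => ∑ i, w i * (((c i - M) / lam) * Real.exp ((c i - M) / lam))
      with hGdef
    set K : ℝ → ℝ := fun lam => G lam / Z lam - Real.log (Z lam) with hKdef
    have hZpos : ∀ lam, 0 < Z lam := fun lam =>
      Finset.sum_pos (fun i _ => mul_pos (hw i) (Real.exp_pos _)) hFne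
    have hcont_div : ∀ a : ℝ, ContinuousOn (fun lam : ℝ => a / lam) (Set.Ioi 0) :=
      fun a => continuousOn_const.div continuousOn_id (fun x hx => ne_of_gt hx)
    have hcont_Z : ContinuousOn Z (Set.Ioi 0) := by
      apply continuousOn_finset_sum
      intro i _
      exact continuousOn_const.mul (Real.continuous_exp.comp_continuousOn (hcont_div _))
    have hcont_G : ContinuousOn G (Set.Ioi 0) := by
      apply continuousOn_finset_sum
      intro i _
      exact continuousOn_const.mul
        ((hcont_div _).mul (Real.continuous_exp.comp_continuousOn (hcont_div _)))
    have hcont_K : ContinuousOn K (Set.Ioi 0) :=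
      (hcont_G.div hcont_Z fun x _ => (hZpos x).ne').sub
        (hcont_Z.log fun x _ => (hZpos x).ne')
    have h0Z : Tendsto Z (nhdsWithin 0 (Set.Ioi 0)) (nhds W) := by
      rw [hWeq]
      apply tendsto_finset_sum
      intro i _
      by_cases h : c i = M
      · have he : (fun lam : ℝ => w i * Real.exp ((c i - M) / lam)) = fun _ => w i := by
          funext lam
          rw [h, sub_self, zero_div, Real.exp_zero, mul_one]
        rw [he, if_pos h]
        exact tendsto_const_nhds
      · rw [if_neg h]
        have hneg : c i - M < 0 := sub_neg.2 (lt_of_le_of_ne (hM i) h)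
        have hdb : Tendsto (fun lam : ℝ => (c i - M) / lam) (nhdsWithin 0 (Set.Ioi 0)) atBot := by
          simp only [div_eq_mul_inv]
          exact Tendsto.const_mul_atTop_of_neg hneg tendsto_inv_nhdsGT_zero
        have := Real.tendsto_exp_atBot.comp hdb
        simpa using tendsto_const_nhds.mul this
    have h0G : Tendsto G (nhdsWithin 0 (Set.Ioi 0)) (nhds 0) := by
      have hG0 : Tendsto G (nhdsWithin 0 (Set.Ioi 0)) (nhds (∑ _i : Fin n, (0:ℝ))) := by
        apply tendsto_finset_sum
        intro i _
        by_cases h : c i = M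
        · have he : (fun lam : ℝ => w i * (((c i - M) / lam) * Real.exp ((c i - M) / lam)))
              = fun _ => 0 := by
            funext lam
            rw [h, sub_self, zero_div, zero_mul, mul_zero]
          rw [he]
          exact tendsto_const_nhds
        · have hpos : 0 < M - c i := sub_pos.2 (lt_of_le_of_ne (hM i) h)
          have hdt : Tendsto (fun lam : ℝ => (M - c i) / lam)
              (nhdsWithin 0 (Set.Ioi 0)) atTop := by
            simp only [div_eq_mul_inv]
            exact Tendsto.const_mul_atTop hpos tendsto_inv_nhdsGT_zero
          have hx := (Real.tendsto_pow_mul_exp_neg_atTop_nhds_zero 1).comp hdt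
          simp only [Function.comp_def] at hx
          have he : ∀ lam : ℝ, w i * (((c i - M) / lam) * Real.exp ((c i - M) / lam))
              = w i * -(((M - c i) / lam) ^ 1 * Real.exp (-((M - c i) / lam))) := by
            intro lam
            have e1 : (c i - M) / lam = -((M - c i) / lam) := by ring
            rw [e1, pow_one]
            ring
          have hmul : Tendsto (fun lam : ℝ =>
              w i * -(((M - c i) / lam) ^ 1 * Real.exp (-((M - c i) / lam))))
              (nhdsWithin 0 (Set.Ioi 0)) (nhds 0) := by
            simpa using tendsto_const_nhds.mul hx.neg
          exact hmul.congr (fun lam => (he lam).symm)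
      simpa using hG0
    have h0K : Tendsto K (nhdsWithin 0 (Set.Ioi 0)) (nhds (-Real.log W)) := by
      have := (h0G.div h0Z hW.ne').sub (h0Z.log hW.ne')
      simpa using this
    obtain ⟨lam₀, hK0, hlam₀⟩ :=
      ((h0K.eventually (eventually_gt_nhds hcase)).and self_mem_nhdsWithin).exists
    have htd : ∀ a : ℝ, Tendsto (fun lam : ℝ => a / lam) atTop (nhds 0) :=
      fun a => Filter.Tendsto.div_atTop tendsto_const_nhds tendsto_id
    have htZ : Tendsto Z atTop (nhds 1) := by
      have hZ1 : Tendsto Z atTop (nhds (∑ i, w i)) := by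
        apply tendsto_finset_sum
        intro i _
        have := (Real.continuous_exp.tendsto 0).comp (htd (c i - M))
        simpa using tendsto_const_nhds.mul this
      rwa [hws] at hZ1
    have htG : Tendsto G atTop (nhds 0) := by
      have hG1 : Tendsto G atTop (nhds (∑ _i : Fin n, (0:ℝ))) := by
        apply tendsto_finset_sum
        intro i _
        have h1 := htd (c i - M)
        have h2 := (Real.continuous_exp.tendsto 0).comp (htd (c i - M))
        simpa using tendsto_const_nhds.mul (h1.mul h2)
      simpa using hG1
    have htK : Tendsto K atTop (nhds 0) := by
      have := (htG.div htZ one_ne_zero).sub (htZ.log one_ne_zero)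
      simpa using this
    obtain ⟨lam₁, hK1, hlam₁⟩ :=
      ((htK.eventually (eventually_lt_nhds hρ)).and (eventually_gt_atTop lam₀)).exists
    have hsub : Set.Icc lam₀ lam₁ ⊆ Set.Ioi 0 := fun x hx => lt_of_lt_of_le hlam₀ hx.1
    obtain ⟨lam, hlamIcc, hKlam⟩ :=
      intermediate_value_Icc' hlam₁.le (hcont_K.mono hsub) ⟨hK1.le, hK0.le⟩
    have hlam : (0:ℝ) < lam := hsub hlamIcc
    have hZs := hZpos lam
    have hKval : G lam / Z lam - Real.log (Z lam) = ρ := hKlam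
    -- the optimal primal point and the matching dual point
    set V : ℝ := M + lam * Real.log (Z lam) + ρ * lam with hVdef
    have hVA : V ∈ A := by
      refine ⟨fun i => w i * Real.exp ((c i - M) / lam) / Z lam, ?_, ?_, ?_, ?_⟩
      · intro i
        show (0:ℝ) ≤ w i * Real.exp ((c i - M) / lam) / Z lam
        exact div_nonneg (mul_pos (hw i) (Real.exp_pos _)).le hZs.le
      · show ∑ i, w i * Real.exp ((c i - M) / lam) / Z lam = 1
        rw [← Finset.sum_div]
        exact div_self hZs.ne'
      · show ∑ i, (w i * Real.exp ((c i - M) / lam) / Z lam)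
            * Real.log ((w i * Real.exp ((c i - M) / lam) / Z lam) / w i) ≤ ρ
        have hsum1 : ∑ i, w i * Real.exp ((c i - M) / lam) / Z lam = 1 := by
          rw [← Finset.sum_div]
          exact div_self hZs.ne'
        have hlogp : ∀ i, Real.log ((w i * Real.exp ((c i - M) / lam) / Z lam) / w i)
            = (c i - M) / lam - Real.log (Z lam) := by
          intro i
          have e : (w i * Real.exp ((c i - M) / lam) / Z lam) / w i
              = Real.exp ((c i - M) / lam) / Z lam := by
            field_simp [(hw i).ne']
          rw [e, Real.log_div (Real.exp_pos _).ne' hZs.ne', Real.log_exp]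
        have h1 : ∀ i, (w i * Real.exp ((c i - M) / lam) / Z lam)
              * Real.log ((w i * Real.exp ((c i - M) / lam) / Z lam) / w i)
            = (w i * (((c i - M) / lam) * Real.exp ((c i - M) / lam))) / Z lam
              - (w i * Real.exp ((c i - M) / lam) / Z lam) * Real.log (Z lam) := by
          intro i
          rw [hlogp i, mul_sub]
          congr 1
          ring
        rw [Finset.sum_congr rfl (fun i _ => h1 i), Finset.sum_sub_distrib,
          ← Finset.sum_div, ← Finset.sum_mul, hsum1, one_mul]
        exact le_of_eq hKval
      · show V = ∑ i, (w i * Real.exp ((c i - M) / lam) / Z lam) * c i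
        have hsum1 : ∑ i, w i * Real.exp ((c i - M) / lam) / Z lam = 1 := by
          rw [← Finset.sum_div]
          exact div_self hZs.ne'
        have h2 : ∀ i, (w i * Real.exp ((c i - M) / lam) / Z lam) * c i
            = lam * ((w i * (((c i - M) / lam) * Real.exp ((c i - M) / lam))) / Z lam)
              + (w i * Real.exp ((c i - M) / lam) / Z lam) * M := by
          intro i
          field_simp
          ring
        rw [Finset.sum_congr rfl (fun i _ => h2 i), Finset.sum_add_distrib,
          ← Finset.mul_sum, ← Finset.sum_div, ← Finset.sum_mul, hsum1, one_mul]
        have hGZ : (∑ i, w i * (((c i - M) / lam) * Real.exp ((c i - M) / lam))) / Z lam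
            = ρ + Real.log (Z lam) := by
          have : G lam / Z lam = ρ + Real.log (Z lam) := by linarith
          exact this
        rw [hGZ, hVdef]
        ring
    have hVB : V ∈ B := by
      refine ⟨lam, M + lam * Real.log (Z lam), hlam, ?_⟩
      have hexpeta : ∀ i, Real.exp ((c i - (M + lam * Real.log (Z lam))) / lam)
          = Real.exp ((c i - M) / lam) / Z lam := by
        intro i
        have e : (c i - (M + lam * Real.log (Z lam))) / lam
            = (c i - M) / lam - Real.log (Z lam) := by
          field_simp
          ring
        rw [e, Real.exp_sub, Real.exp_log hZs]
      have hzero : ∑ i, w i * (Real.exp ((c i - (M + lam * Real.log (Z lam))) / lam) - 1)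
          = 0 := by
        have h3 : ∀ i, w i * (Real.exp ((c i - (M + lam * Real.log (Z lam))) / lam) - 1)
            = w i * Real.exp ((c i - M) / lam) / Z lam - w i := by
          intro i
          rw [hexpeta i]
          ring
        rw [Finset.sum_congr rfl (fun i _ => h3 i), Finset.sum_sub_distrib,
          ← Finset.sum_div, hws]
        have : (∑ i, w i * Real.exp ((c i - M) / lam)) / Z lam = 1 := div_self hZs.ne'
        rw [this]
        ring
      rw [hzero, hVdef]
      ring
    exact (csInf_le hBbdd hVB).trans (le_csSup hAbdd hVA)
end

section
/- Let n ≥ 1, let w ∈ ℝ^n be a probability vector with strictly positive entries, let c ∈ ℝ^n, ρ > 0 and β ∈ ℝ. Then Σ_i p_i·c_i ≤ β holds for every p ∈ U_w^ρ if and only if inf { η + ρ·λ + λ·Σ_i w_i·( e^{(c_i − η)/λ} − 1 ) : λ > 0, η ∈ ℝ } ≤ β. In particular, an LSM configuration with cost vector c is feasible for the epigraph reformulation of the robust tuning problem at level β exactly when the minimum of the dual objective g(λ, η) is at most β. -/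
open Real Finset

-- Young / Fenchel inequality for exp and x log x - x
lemma young_exp (a t : ℝ) (ha : 0 ≤ a) :
    a * t ≤ a * Real.log a - a + Real.exp t := by
  rcases ha.eq_or_lt with h | h
  · rw [← h]; simp; positivity
  · have h1 := Real.add_one_le_exp (t - Real.log a)
    rw [Real.exp_sub, Real.exp_log h] at h1
    have h2 : (t - Real.log a + 1) * a ≤ (Real.exp t / a) * a :=
      mul_le_mul_of_nonneg_right h1 h.le
    rw [div_mul_cancel₀ _ h.ne'] at h2
    nlinarith

-- pointwise version scaled by w
lemma young_scaled (wi pi t : ℝ) (hwi : 0 < wi) (hpi : 0 ≤ pi) :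
    pi * t ≤ pi * Real.log (pi / wi) - pi + wi * Real.exp t := by
  have h := young_exp (pi / wi) t (by positivity)
  have h2 := mul_le_mul_of_nonneg_left h hwi.le
  have hne : wi ≠ 0 := hwi.ne'
  calc pi * t = wi * (pi / wi * t) := by field_simp
    _ ≤ wi * (pi / wi * Real.log (pi / wi) - pi / wi + Real.exp t) := h2
    _ = pi * Real.log (pi / wi) - pi + wi * Real.exp t := by field_simp

lemma kl_nonneg (n : ℕ) (w p : Fin n → ℝ) (hw : ∀ i, 0 < w i) (hws : ∑ i, w i = 1)
    (hp0 : ∀ i, 0 ≤ p i) (hp1 : ∑ i, p i = 1) :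
    0 ≤ ∑ i, p i * Real.log (p i / w i) := by
  have key : ∀ i : Fin n, 0 ≤ p i * Real.log (p i / w i) - p i + w i * Real.exp 0 := by
    intro i
    have := young_scaled (w i) (p i) 0 (hw i) (hp0 i)
    linarith
  have := Finset.sum_le_sum (fun i (_ : i ∈ Finset.univ) => key i)
  simp only [Real.exp_zero, mul_one, Finset.sum_add_distrib, Finset.sum_sub_distrib,
    Finset.sum_const_zero, hp1, hws] at this
  linarith

lemma weak_duality (n : ℕ) (w c p : Fin n → ℝ) (ρ : ℝ)
    (hw : ∀ i, 0 < w i) (hws : ∑ i, w i = 1)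
    (hp0 : ∀ i, 0 ≤ p i) (hp1 : ∑ i, p i = 1)
    (hpρ : ∑ i, p i * Real.log (p i / w i) ≤ ρ)
    (lam η : ℝ) (hlam : 0 < lam) :
    ∑ i, p i * c i ≤ η + ρ * lam + lam * ∑ i, w i * (Real.exp ((c i - η) / lam) - 1) := by
  have key : ∀ i : Fin n, p i * ((c i - η) / lam) ≤
      p i * Real.log (p i / w i) - p i + w i * Real.exp ((c i - η) / lam) :=
    fun i => young_scaled (w i) (p i) _ (hw i) (hp0 i)
  have hsum := Finset.sum_le_sum (fun i (_ : i ∈ Finset.univ) => key i)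
  rw [Finset.sum_add_distrib, Finset.sum_sub_distrib, hp1] at hsum
  have hsum2 : ∑ i, p i * ((c i - η) / lam) ≤
      ρ - 1 + ∑ i, w i * Real.exp ((c i - η) / lam) := by linarith
  have e1 : ∑ i, w i * (Real.exp ((c i - η) / lam) - 1)
      = (∑ i, w i * Real.exp ((c i - η) / lam)) - 1 := by
    simp [mul_sub, Finset.sum_sub_distrib, hws]
  have e2 : (∑ i, p i * c i) - η = lam * ∑ i, p i * ((c i - η) / lam) := by
    rw [Finset.mul_sum]
    have h3 : ∀ i : Fin n, lam * (p i * ((c i - η) / lam)) = p i * c i - p i * η := by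
      intro i; field_simp
    rw [Finset.sum_congr rfl fun i _ => h3 i, Finset.sum_sub_distrib, ← Finset.sum_mul, hp1]
    ring
  have h4 := mul_le_mul_of_nonneg_left hsum2 hlam.le
  rw [e1]
  nlinarith

noncomputable def Zf (n : ℕ) (w c : Fin n → ℝ) (lam : ℝ) : ℝ :=
  ∑ i, w i * Real.exp (c i / lam)

noncomputable def pfv (n : ℕ) (w c : Fin n → ℝ) (lam : ℝ) (i : Fin n) : ℝ :=
  w i * Real.exp (c i / lam) / Zf n w c lam

noncomputable def Ff (n : ℕ) (w c : Fin n → ℝ) (lam : ℝ) : ℝ :=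
  (∑ i, w i * Real.exp (c i / lam) * c i) / (Zf n w c lam * lam)
    - Real.log (Zf n w c lam)

lemma Zf_pos (n : ℕ) (hn : 1 ≤ n) (w c : Fin n → ℝ) (hw : ∀ i, 0 < w i) (lam : ℝ) :
    0 < Zf n w c lam := by
  apply Finset.sum_pos (fun i _ => mul_pos (hw i) (Real.exp_pos _))
  exact ⟨⟨0, hn⟩, Finset.mem_univ _⟩

lemma pfv_sum (n : ℕ) (hn : 1 ≤ n) (w c : Fin n → ℝ) (hw : ∀ i, 0 < w i) (lam : ℝ) :
    ∑ i, pfv n w c lam i = 1 := by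
  unfold pfv
  rw [← Finset.sum_div, show (∑ i, w i * Real.exp (c i / lam)) = Zf n w c lam from rfl,
    div_self (Zf_pos n hn w c hw lam).ne']

lemma pfv_kl (n : ℕ) (hn : 1 ≤ n) (w c : Fin n → ℝ) (hw : ∀ i, 0 < w i)
    (lam : ℝ) (hlam : 0 < lam) :
    ∑ i, pfv n w c lam i * Real.log (pfv n w c lam i / w i) = Ff n w c lam := by
  have hZ := Zf_pos n hn w c hw lam
  have h1 : ∀ i : Fin n, pfv n w c lam i * Real.log (pfv n w c lam i / w i)
      = w i * Real.exp (c i / lam) * c i / (Zf n w c lam * lam)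
        - pfv n w c lam i * Real.log (Zf n w c lam) := by
    intro i
    have hwi := hw i
    have hdiv : pfv n w c lam i / w i = Real.exp (c i / lam) / Zf n w c lam := by
      unfold pfv; field_simp
    rw [hdiv, Real.log_div (Real.exp_ne_zero _) hZ.ne', Real.log_exp]
    unfold pfv
    field_simp
  rw [Finset.sum_congr rfl fun i _ => h1 i, Finset.sum_sub_distrib, ← Finset.sum_div,
    ← Finset.sum_mul, pfv_sum n hn w c hw lam, one_mul]
  rfl

lemma pfv_dot (n : ℕ) (hn : 1 ≤ n) (w c : Fin n → ℝ) (hw : ∀ i, 0 < w i)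
    (lam : ℝ) (hlam : 0 < lam) :
    ∑ i, pfv n w c lam i * c i
      = lam * (Ff n w c lam + Real.log (Zf n w c lam)) := by
  have hZ := Zf_pos n hn w c hw lam
  unfold Ff
  have h1 : ∑ i, pfv n w c lam i * c i = (∑ i, w i * Real.exp (c i / lam) * c i) / Zf n w c lam := by
    rw [Finset.sum_div]
    exact Finset.sum_congr rfl fun i _ => by unfold pfv; ring
  rw [h1]
  field_simp
  ring

lemma Zf_contOn (n : ℕ) (w c : Fin n → ℝ) :
    ContinuousOn (Zf n w c) (Set.Ioi 0) := by
  apply continuousOn_finset_sum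
  intro i _
  exact continuousOn_const.mul (Real.continuous_exp.comp_continuousOn
    (continuousOn_const.div continuousOn_id (fun x hx => ne_of_gt hx)))

lemma Ff_contOn (n : ℕ) (hn : 1 ≤ n) (w c : Fin n → ℝ) (hw : ∀ i, 0 < w i) :
    ContinuousOn (Ff n w c) (Set.Ioi 0) := by
  have hZc := Zf_contOn n w c
  apply ContinuousOn.sub
  · apply ContinuousOn.div
    · apply continuousOn_finset_sum
      intro i _
      exact (continuousOn_const.mul (Real.continuous_exp.comp_continuousOn
        (continuousOn_const.div continuousOn_id (fun x hx => ne_of_gt hx)))).mul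
        continuousOn_const
    · exact hZc.mul continuousOn_id
    · intro x hx
      exact (mul_pos (Zf_pos n hn w c hw x) hx).ne'
  · exact hZc.log (fun x hx => (Zf_pos n hn w c hw x).ne')

lemma Ff_bound (n : ℕ) (hn : 1 ≤ n) (w c : Fin n → ℝ) (hw : ∀ i, 0 < w i)
    (hws : ∑ i, w i = 1) (lam : ℝ) (hlam : 0 < lam) :
    Ff n w c lam ≤ (Finset.univ.sup' ⟨⟨0, hn⟩, Finset.mem_univ _⟩ c - ∑ i, w i * c i) / lam := by
  set M := Finset.univ.sup' ⟨⟨0, hn⟩, Finset.mem_univ _⟩ c with hM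
  set μ := ∑ i, w i * c i with hμ
  have hZ := Zf_pos n hn w c hw lam
  have part1 : (∑ i, w i * Real.exp (c i / lam) * c i) / (Zf n w c lam * lam) ≤ M / lam := by
    have h1 : (∑ i, w i * Real.exp (c i / lam) * c i) ≤ Zf n w c lam * M := by
      rw [show Zf n w c lam * M = ∑ i, w i * Real.exp (c i / lam) * M from by
        rw [← Finset.sum_mul]; rfl]
      apply Finset.sum_le_sum
      intro i _
      exact mul_le_mul_of_nonneg_left (Finset.le_sup' c (Finset.mem_univ i))
        (mul_pos (hw i) (Real.exp_pos _)).le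
    have h2 := (div_le_div_iff_of_pos_right (mul_pos (Zf_pos n hn w c hw lam) hlam)).mpr h1
    rwa [mul_div_mul_left _ _ hZ.ne'] at h2
  have part2 : μ / lam ≤ Real.log (Zf n w c lam) := by
    rw [← Real.log_exp (μ / lam)]
    apply Real.log_le_log (Real.exp_pos _)
    have key : 1 ≤ Zf n w c lam * Real.exp (-(μ / lam)) := by
      have h2 : Zf n w c lam * Real.exp (-(μ / lam))
          = ∑ i, w i * Real.exp (c i / lam - μ / lam) := by
        rw [show Zf n w c lam = ∑ i, w i * Real.exp (c i / lam) from rfl, Finset.sum_mul]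
        apply Finset.sum_congr rfl
        intro i _
        rw [mul_assoc, ← Real.exp_add]
        ring_nf
      rw [h2]
      have h3 : ∑ i, w i * (c i / lam - μ / lam + 1) ≤ ∑ i, w i * Real.exp (c i / lam - μ / lam) :=
        Finset.sum_le_sum fun i _ => mul_le_mul_of_nonneg_left
          (Real.add_one_le_exp _) (hw i).le
      have h4 : ∑ i, w i * (c i / lam - μ / lam + 1) = 1 := by
        have : ∀ i : Fin n, w i * (c i / lam - μ / lam + 1)
            = w i * c i / lam - w i * (μ / lam) + w i := fun i => by ring
        rw [Finset.sum_congr rfl fun i _ => this i, Finset.sum_add_distrib,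
          Finset.sum_sub_distrib, ← Finset.sum_div, ← Finset.sum_mul, hws, ← hμ]
        ring
      linarith
    calc Real.exp (μ / lam) = 1 * Real.exp (μ / lam) := by ring
      _ ≤ (Zf n w c lam * Real.exp (-(μ / lam))) * Real.exp (μ / lam) :=
          mul_le_mul_of_nonneg_right key (Real.exp_pos _).le
      _ = Zf n w c lam := by rw [mul_assoc, ← Real.exp_add]; simp
  unfold Ff
  rw [sub_div]
  linarith

lemma dual_point_mem (n : ℕ) (hn : 1 ≤ n) (w c : Fin n → ℝ) (hw : ∀ i, 0 < w i)
    (hws : ∑ i, w i = 1) (ρ lam : ℝ) (hlam : 0 < lam) :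
    lam * Real.log (Zf n w c lam) + ρ * lam ∈
      {x : ℝ | ∃ lam η : ℝ, 0 < lam ∧
          x = η + ρ * lam + lam * ∑ i, w i * (Real.exp ((c i - η) / lam) - 1)} := by
  have hZ := Zf_pos n hn w c hw lam
  refine ⟨lam, lam * Real.log (Zf n w c lam), hlam, ?_⟩
  have h1 : ∀ i : Fin n, Real.exp ((c i - lam * Real.log (Zf n w c lam)) / lam)
      = Real.exp (c i / lam) / Zf n w c lam := by
    intro i
    rw [show (c i - lam * Real.log (Zf n w c lam)) / lam
        = c i / lam - Real.log (Zf n w c lam) from by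
          rw [sub_div, mul_div_cancel_left₀ _ hlam.ne'],
      Real.exp_sub, Real.exp_log hZ]
  have h2 : ∑ i, w i * (Real.exp ((c i - lam * Real.log (Zf n w c lam)) / lam) - 1) = 0 := by
    rw [Finset.sum_congr rfl fun i _ => by rw [h1 i]]
    have : ∀ i : Fin n, w i * (Real.exp (c i / lam) / Zf n w c lam - 1)
        = w i * Real.exp (c i / lam) / Zf n w c lam - w i := fun i => by
          rw [mul_sub, mul_one, mul_div_assoc]
    rw [Finset.sum_congr rfl fun i _ => this i, Finset.sum_sub_distrib, ← Finset.sum_div,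
      show (∑ i, w i * Real.exp (c i / lam)) = Zf n w c lam from rfl,
      div_self hZ.ne', hws, sub_self]
  rw [h2]
  ring

/-- Epigraph feasibility for the robust tuning problem: a configuration with cost
vector `c` satisfies `Σ_i p_i·c_i ≤ β` for every `p` in the uncertainty region `U_w^ρ`
iff the infimum of the Lagrangian dual objective
`g(λ, η) = η + ρ·λ + λ·Σ_i w_i·(e^{(c_i - η)/λ} - 1)` over `λ > 0, η ∈ ℝ` is ≤ β. -/
theorem robust_tuning_epigraph_feasibility (n : ℕ) (hn : 1 ≤ n) (w : Fin n → ℝ)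
    (hw : ∀ i, 0 < w i) (hws : ∑ i, w i = 1) (c : Fin n → ℝ) (ρ : ℝ) (hρ : 0 < ρ)
    (β : ℝ) :
    (∀ p : Fin n → ℝ, (∀ i, 0 ≤ p i) → (∑ i, p i = 1) →
        (∑ i, p i * Real.log (p i / w i)) ≤ ρ → ∑ i, p i * c i ≤ β)
      ↔ sInf {x : ℝ | ∃ lam η : ℝ, 0 < lam ∧
          x = η + ρ * lam + lam * ∑ i, w i * (Real.exp ((c i - η) / lam) - 1)} ≤ β := by
  have hwkl : ∑ i, w i * Real.log (w i / w i) ≤ ρ := by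
    have h0 : ∀ i : Fin n, Real.log (w i / w i) = 0 := fun i => by
      rw [div_self (hw i).ne', Real.log_one]
    rw [Finset.sum_congr rfl fun i _ => by rw [h0 i, mul_zero]]
    simp
    exact hρ.le
  have hSne : Set.Nonempty {x : ℝ | ∃ lam η : ℝ, 0 < lam ∧
      x = η + ρ * lam + lam * ∑ i, w i * (Real.exp ((c i - η) / lam) - 1)} :=
    ⟨_, 1, 0, one_pos, rfl⟩
  have hSbdd : BddBelow {x : ℝ | ∃ lam η : ℝ, 0 < lam ∧
      x = η + ρ * lam + lam * ∑ i, w i * (Real.exp ((c i - η) / lam) - 1)} := by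
    refine ⟨∑ i, w i * c i, ?_⟩
    rintro x ⟨lam, η, hlam, rfl⟩
    exact weak_duality n w c w ρ hw hws (fun i => (hw i).le) hws hwkl lam η hlam
  constructor
  · intro hfeas
    set M := Finset.univ.sup' ⟨⟨0, hn⟩, Finset.mem_univ _⟩ c with hM
    set μ := ∑ i, w i * c i with hμ
    set lamI := max 1 ((M - μ) / ρ + 1) with hlamI
    have hlamIpos : 0 < lamI := lt_of_lt_of_le one_pos (le_max_left _ _)
    have hFlamI : Ff n w c lamI < ρ := by
      have hb := Ff_bound n hn w c hw hws lamI hlamIpos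
      have h2 : (M - μ) / lamI < ρ := by
        rw [div_lt_iff₀ hlamIpos]
        have h3 : (M - μ) / ρ + 1 ≤ lamI := le_max_right _ _
        have h4 := mul_le_mul_of_nonneg_left h3 hρ.le
        have h5 : ρ * ((M - μ) / ρ + 1) = (M - μ) + ρ := by field_simp
        nlinarith
      exact lt_of_le_of_lt hb h2
    have hfeasP : ∀ lam : ℝ, 0 < lam → Ff n w c lam ≤ ρ →
        ∑ i, pfv n w c lam i * c i ≤ β := by
      intro lam hlam hF
      exact hfeas (pfv n w c lam)
        (fun i => (div_pos (mul_pos (hw i) (Real.exp_pos _)) (Zf_pos n hn w c hw lam)).le)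
        (pfv_sum n hn w c hw lam)
        (by rw [pfv_kl n hn w c hw lam hlam]; exact hF)
    by_cases hcase : ∀ lam : ℝ, 0 < lam → lam ≤ lamI → Ff n w c lam ≤ ρ
    · apply le_of_forall_pos_le_add
      intro ε hε
      set lam := min lamI (ε / ρ) with hlamdef
      have hlam : 0 < lam := lt_min hlamIpos (div_pos hε hρ)
      have hF := hcase lam hlam (min_le_left _ _)
      have hfeasp := hfeasP lam hlam hF
      have hmem := dual_point_mem n hn w c hw hws ρ lam hlam
      have hF0 : 0 ≤ Ff n w c lam := by
        rw [← pfv_kl n hn w c hw lam hlam]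
        exact kl_nonneg n w (pfv n w c lam) hw hws
          (fun i => (div_pos (mul_pos (hw i) (Real.exp_pos _)) (Zf_pos n hn w c hw lam)).le)
          (pfv_sum n hn w c hw lam)
      have hval : lam * Real.log (Zf n w c lam) + ρ * lam
          = (∑ i, pfv n w c lam i * c i) + lam * (ρ - Ff n w c lam) := by
        rw [pfv_dot n hn w c hw lam hlam]; ring
      have hsmall : lam * (ρ - Ff n w c lam) ≤ ε :=
        calc lam * (ρ - Ff n w c lam) ≤ lam * ρ :=
              mul_le_mul_of_nonneg_left (by linarith) hlam.le
          _ ≤ (ε / ρ) * ρ := mul_le_mul_of_nonneg_right (min_le_right _ _) hρ.le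
          _ = ε := div_mul_cancel₀ _ hρ.ne'
      calc sInf _ ≤ lam * Real.log (Zf n w c lam) + ρ * lam := csInf_le hSbdd hmem
        _ ≤ β + ε := by rw [hval]; linarith
    · push_neg at hcase
      obtain ⟨lamO, hlamOpos, hlamOle, hlamO⟩ := hcase
      have hsub : Set.Icc lamO lamI ⊆ Set.Ioi 0 := fun x hx => lt_of_lt_of_le hlamOpos hx.1
      have hivt := intermediate_value_Icc' hlamOle ((Ff_contOn n hn w c hw).mono hsub)
      obtain ⟨lam, hlamIcc, hlamF⟩ := hivt ⟨hFlamI.le, hlamO.le⟩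
      have hlam : 0 < lam := lt_of_lt_of_le hlamOpos hlamIcc.1
      have hfeasp := hfeasP lam hlam (le_of_eq hlamF)
      have hmem := dual_point_mem n hn w c hw hws ρ lam hlam
      calc sInf _ ≤ lam * Real.log (Zf n w c lam) + ρ * lam := csInf_le hSbdd hmem
        _ = ∑ i, pfv n w c lam i * c i := by
            rw [pfv_dot n hn w c hw lam hlam, ← hlamF]; ring
        _ ≤ β := hfeasp
  · intro hinf p hp0 hp1 hpρ
    refine le_trans (le_csInf hSne ?_) hinf
    rintro x ⟨lam, η, hlam, rfl⟩
    exact weak_duality n w c p ρ hw hws hp0 hp1 hpρ lam η hlam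
end
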